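/- For nonempty relations R, S ⊆ X × Y between compact metric spaces, |dis(R) − dis(S)| ≤ 4·δ_H(R,S), where δ_H is the Hausdorff distance induced by the sup product metric on X × Y and dis(R) := sup over (x,y),(x',y') ∈ R of |d_X(x,x') − d_Y(y,y')|. -/

import Mathlib

open Metric GromovHausdorff Set

variable {X Y : Type*} [MetricSpace X] [MetricSpace Y]

/-- A correspondence between `X` and `Y`: a relation surjective onto both factors. -/
def IsCorrespondence (R : Set (X × Y)) : Prop :=
  (∀ x : X, ∃ y : Y, (x, y) ∈ R) ∧ (∀ y : Y, ∃ x : X, (x, y) ∈ R)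

/-- The distortion of a relation `R ⊆ X × Y`. -/
noncomputable def dis (R : Set (X × Y)) : ℝ :=
  sSup ((fun pq : (X × Y) × (X × Y) => |dist pq.1.1 pq.2.1 - dist pq.1.2 pq.2.2|) '' (R ×ˢ R))

lemma dis_bddAbove [CompactSpace X] [CompactSpace Y] (R : Set (X × Y)) :
    BddAbove ((fun pq : (X × Y) × (X × Y) => |dist pq.1.1 pq.2.1 - dist pq.1.2 pq.2.2|) ''
      (R ×ˢ R)) := by
  refine ⟨diam (univ : Set X) + diam (univ : Set Y), ?_⟩
  rintro v ⟨⟨p, q⟩, -, rfl⟩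
  calc |dist p.1 q.1 - dist p.2 q.2| ≤ dist p.1 q.1 + dist p.2 q.2 := by
        have h1 : (0:ℝ) ≤ dist p.1 q.1 := dist_nonneg
        have h2 : (0:ℝ) ≤ dist p.2 q.2 := dist_nonneg
        exact abs_le.mpr ⟨by linarith, by linarith⟩
    _ ≤ _ := add_le_add (dist_le_diam_of_mem isBounded_of_compactSpace (mem_univ _) (mem_univ _))
        (dist_le_diam_of_mem isBounded_of_compactSpace (mem_univ _) (mem_univ _))

lemma dis_nonneg' [CompactSpace X] [CompactSpace Y] {R : Set (X × Y)} (hR : R.Nonempty) :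
    0 ≤ dis R := by
  obtain ⟨p, hp⟩ := hR
  exact le_trans (abs_nonneg _) (le_csSup (dis_bddAbove R) ⟨(p, p), ⟨hp, hp⟩, rfl⟩)

lemma dis_le_dis_add [CompactSpace X] [CompactSpace Y] (R S : Set (X × Y)) (hR : R.Nonempty)
    (hS : S.Nonempty) : dis R ≤ dis S + 4 * hausdorffDist R S := by
  have hne : EMetric.hausdorffEdist R S ≠ ⊤ :=
    hausdorffEdist_ne_top_of_nonempty_of_bounded hR hS
      (isBounded_of_compactSpace.subset (subset_univ R))
      (isBounded_of_compactSpace.subset (subset_univ S))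
  have hH : 0 ≤ hausdorffDist R S := hausdorffDist_nonneg
  refine Real.sSup_le ?_ (by linarith [dis_nonneg' hS])
  rintro v ⟨⟨p, q⟩, ⟨hp, hq⟩, rfl⟩
  refine le_of_forall_pos_le_add fun ε hε => ?_
  have h4 : hausdorffDist R S < hausdorffDist R S + ε / 4 := by linarith
  obtain ⟨p', hp', hpp'⟩ := exists_dist_lt_of_hausdorffDist_lt hp h4 hne
  obtain ⟨q', hq', hqq'⟩ := exists_dist_lt_of_hausdorffDist_lt hq h4 hne
  have hS' : |dist p'.1 q'.1 - dist p'.2 q'.2| ≤ dis S :=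
    le_csSup (dis_bddAbove S) ⟨(p', q'), ⟨hp', hq'⟩, rfl⟩
  have h1 : dist (dist p.1 q.1) (dist p'.1 q'.1) ≤ dist p.1 p'.1 + dist q.1 q'.1 :=
    dist_dist_dist_le _ _ _ _
  have h2 : dist (dist p.2 q.2) (dist p'.2 q'.2) ≤ dist p.2 p'.2 + dist q.2 q'.2 :=
    dist_dist_dist_le _ _ _ _
  have e1 : dist p.1 p'.1 ≤ dist p p' := le_max_left _ _
  have e2 : dist p.2 p'.2 ≤ dist p p' := le_max_right _ _
  have e3 : dist q.1 q'.1 ≤ dist q q' := le_max_left _ _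
  have e4 : dist q.2 q'.2 ≤ dist q q' := le_max_right _ _
  rw [Real.dist_eq] at h1 h2
  calc |dist p.1 q.1 - dist p.2 q.2|
      ≤ |dist p'.1 q'.1 - dist p'.2 q'.2| + |dist p.1 q.1 - dist p'.1 q'.1|
        + |dist p.2 q.2 - dist p'.2 q'.2| := by
        rw [abs_sub_comm (dist p.2 q.2)]
        calc |dist p.1 q.1 - dist p.2 q.2|
            = |(dist p'.1 q'.1 - dist p'.2 q'.2) + (dist p.1 q.1 - dist p'.1 q'.1)
              + (dist p'.2 q'.2 - dist p.2 q.2)| := by ring_nf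
          _ ≤ _ := by
              refine (abs_add_le _ _).trans (add_le_add_left (abs_add_le _ _) _)
    _ ≤ dis S + 4 * hausdorffDist R S + ε := by
        have := hS'
        nlinarith [abs_nonneg (dist p.1 q.1 - dist p'.1 q'.1)]

theorem abs_dis_sub_dis_le_four_hausdorffDist {X Y : Type*} [MetricSpace X] [MetricSpace Y]
    [CompactSpace X] [CompactSpace Y] (R S : Set (X × Y)) (hR : R.Nonempty) (hS : S.Nonempty) :
    |dis R - dis S| ≤ 4 * hausdorffDist R S := by
  rw [abs_sub_le_iff]
  constructor
  · linarith [dis_le_dis_add R S hR hS]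
  · rw [hausdorffDist_comm]
    linarith [dis_le_dis_add S R hS hR]
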